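/- Let G be a locally compact topological group with a left Haar measure dz, let X be a set equipped with an action ρ of G, and let φ : X → G satisfy φ(ρ(g)m) = g·φ(m)·g⁻¹ for all g ∈ G, m ∈ X. Define the 'ribbon' operator T on functions ψ : X → ℂ by (Tψ)(m) = ψ(ρ(φ(m)⁻¹)m), and for continuous compactly supported F : G × G → ℂ define (Π(F)ψ)(m) = ∫_G F(z, φ(m)) ψ(ρ(z⁻¹)m) dz. Then T is a bijection on the space of functions ψ : X → ℂ and it commutes with every Π(F): Π(F)(Tψ) = T(Π(F)ψ) pointwise for all continuous compactly supported F and all functions ψ for which the integrals exist (e.g. all bounded measurable ψ when X carries a measurable structure making ρ and φ measurable). -/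

import Mathlib

open MeasureTheory

/-- The representation `(Π(F)ψ)(m) = ∫_G F(z, φ(m)) ψ(ρ(z⁻¹)m) dz` of the quantum
double associated to a `G`-action `ρ` on `X` and an equivariant map `φ : X → G`. -/
noncomputable def qdRep {G X : Type*} [Group G] [MeasurableSpace G]
    (μ : Measure G) (ρ : G → X → X) (φ : X → G)
    (F : G × G → ℂ) (ψ : X → ℂ) : X → ℂ :=
  fun m => ∫ z, F (z, φ m) * ψ (ρ z⁻¹ m) ∂μ

/-- The ribbon operator `(Tψ)(m) = ψ(ρ(φ(m)⁻¹)m)` is a bijection on functions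
`X → ℂ` and commutes with every operator `Π(F)` for `F : G × G → ℂ` continuous with
compact support. -/
theorem ribbon_operator_bijective_and_commutes
    {G : Type*} [Group G] [TopologicalSpace G] [IsTopologicalGroup G]
    [LocallyCompactSpace G] [MeasurableSpace G] [BorelSpace G]
    (μ : Measure G) [μ.IsHaarMeasure]
    {X : Type*} (ρ : G → X → X)
    (hρ_one : ∀ m, ρ 1 m = m)
    (hρ_mul : ∀ g h m, ρ (g * h) m = ρ g (ρ h m))
    (φ : X → G) (hφ : ∀ g m, φ (ρ g m) = g * φ m * g⁻¹)
    (T : (X → ℂ) → (X → ℂ))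
    (hT : ∀ (ψ : X → ℂ) (m : X), T ψ m = ψ (ρ (φ m)⁻¹ m)) :
    Function.Bijective T ∧
    (∀ F : G × G → ℂ, Continuous F → HasCompactSupport F →
      ∀ (ψ : X → ℂ) (m : X), qdRep μ ρ φ F (T ψ) m = T (qdRep μ ρ φ F ψ) m) := by
  have hφ_fix : ∀ m, φ (ρ (φ m)⁻¹ m) = φ m := by
    intro m; rw [hφ]; group
  have hφ_fix' : ∀ m, φ (ρ (φ m) m) = φ m := by
    intro m; rw [hφ]; group
  have hS : ∀ (ψ : X → ℂ), T (fun m => ψ (ρ (φ m) m)) = ψ := by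
    intro ψ
    funext m
    rw [hT]
    simp only [hφ_fix, ← hρ_mul, mul_inv_cancel, hρ_one]
  constructor
  · constructor
    · intro ψ1 ψ2 h
      funext m
      have h1 := congrFun h (ρ (φ m) m)
      rw [hT, hT, hφ_fix', ← hρ_mul, inv_mul_cancel, hρ_one] at h1
      exact h1
    · intro ψ
      exact ⟨fun m => ψ (ρ (φ m) m), hS ψ⟩
  · intro F _ _ ψ m
    rw [hT]
    simp only [qdRep, hT, hφ_fix]
    refine integral_congr_ae (Filter.Eventually.of_forall fun z => ?_)
    have h1 : φ (ρ z⁻¹ m) = z⁻¹ * φ m * z := by rw [hφ]; group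
    simp only [h1, ← hρ_mul]
    congr 2
    group
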